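/- Let h(r)=f(r)+r g(r) with f, g Lipschitz and bounded g. If |ε|_∞ ≤ 1/2 then the linearized operator satisfies R̃_ε h(r) = f_ε(r) + r g_ε(r) where |f_ε|_∞ ≤ C(Lip(f)+|g|_∞)|ε|_∞ and |g_ε|_∞ ≤ C Lip(g)|ε|_∞ for a universal constant C. -/

import Mathlib

/-- The linearized operator `R̃_ε f (r) = ∑_{ℓ≥1} f(r+ℓ) 2^{-ℓ} ε̃_{r,ℓ}` where
`ε̃_{r,ℓ} = -ε_{r+ℓ} + ∑_{i=1}^{ℓ-1} ε_{r+i}`. -/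
noncomputable def Rtilde (ε : ℕ → ℝ) (f : ℕ → ℝ) (r : ℕ) : ℝ :=
  ∑' ℓ : ℕ, f (r + ℓ + 1) * (2 : ℝ) ^ (-(ℓ + 1 : ℤ)) *
    (-ε (r + ℓ + 1) + ∑ i ∈ Finset.range ℓ, ε (r + i + 1))


noncomputable def aa (ε : ℕ → ℝ) (r ℓ : ℕ) : ℝ :=
  (2 : ℝ) ^ (-(ℓ + 1 : ℤ)) * (-ε (r + ℓ + 1) + ∑ i ∈ Finset.range ℓ, ε (r + i + 1))

lemma two_zpow_eq (ℓ : ℕ) : (2 : ℝ) ^ (-(ℓ + 1 : ℤ)) = (1/2 : ℝ) ^ (ℓ + 1) := by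
  rw [zpow_neg, one_div, inv_pow]
  norm_cast

lemma aa_abs_le (ε : ℕ → ℝ) (r ℓ : ℕ) (E : ℝ) (hE : ∀ j, |ε j| ≤ E) :
    |aa ε r ℓ| ≤ E * ((ℓ : ℝ) + 1) * (1/2 : ℝ) ^ (ℓ + 1) := by
  have h0 : (0:ℝ) ≤ E := (abs_nonneg _).trans (hE 0)
  rw [aa, two_zpow_eq, abs_mul, abs_pow, abs_of_nonneg (by norm_num : (0:ℝ) ≤ (1/2:ℝ))]
  have hb : |(-ε (r + ℓ + 1) + ∑ i ∈ Finset.range ℓ, ε (r + i + 1))| ≤ E * ((ℓ : ℝ) + 1) := by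
    calc |(-ε (r + ℓ + 1) + ∑ i ∈ Finset.range ℓ, ε (r + i + 1))|
        ≤ |(-ε (r + ℓ + 1))| + |∑ i ∈ Finset.range ℓ, ε (r + i + 1)| := abs_add_le _ _
      _ ≤ E + ∑ i ∈ Finset.range ℓ, E := by
          gcongr
          · rw [abs_neg]; exact hE _
          · exact (Finset.abs_sum_le_sum_abs _ _).trans
              (Finset.sum_le_sum fun i _ => hE _)
      _ = E * ((ℓ : ℝ) + 1) := by
          rw [Finset.sum_const, Finset.card_range]
          ring
  calc (1/2 : ℝ) ^ (ℓ + 1) * |(-ε (r + ℓ + 1) + ∑ i ∈ Finset.range ℓ, ε (r + i + 1))|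
      ≤ (1/2 : ℝ) ^ (ℓ + 1) * (E * ((ℓ : ℝ) + 1)) := by gcongr
    _ = E * ((ℓ : ℝ) + 1) * (1/2 : ℝ) ^ (ℓ + 1) := by ring

lemma bsummable : Summable (fun n : ℕ => ((n : ℝ) + 1) ^ 2 * (1/2 : ℝ) ^ (n + 1)) := by
  have h : Summable (fun n : ℕ => (n : ℝ) ^ 2 * (1/2 : ℝ) ^ n) :=
    summable_pow_mul_geometric_of_norm_lt_one 2 (by rw [Real.norm_eq_abs, abs_of_nonneg]; norm_num; norm_num)
  have h2 := (summable_nat_add_iff 1).2 h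
  exact h2.congr fun n => by push_cast; ring

noncomputable def Bconst : ℝ := ∑' n : ℕ, ((n : ℝ) + 1) ^ 2 * (1/2 : ℝ) ^ (n + 1)

lemma Bconst_nonneg : 0 ≤ Bconst :=
  tsum_nonneg fun n => by positivity

lemma summable_mul_aa (ε : ℕ → ℝ) (r : ℕ) (E c : ℝ) (hE : ∀ j, |ε j| ≤ E)
    (u : ℕ → ℝ) (hu : ∀ ℓ, |u ℓ| ≤ c * ((ℓ : ℝ) + 1)) :
    Summable (fun ℓ : ℕ => u ℓ * aa ε r ℓ) := by
  have h0 : (0:ℝ) ≤ E := (abs_nonneg _).trans (hE 0)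
  have hc : (0:ℝ) ≤ c := by
    have := (abs_nonneg (u 0)).trans (hu 0); nlinarith
  refine Summable.of_norm_bounded
    (g := fun ℓ : ℕ => (c * E) * (((ℓ:ℝ)+1)^2 * (1/2:ℝ)^(ℓ+1))) (bsummable.mul_left _) ?_
  intro ℓ
  rw [Real.norm_eq_abs, abs_mul]
  calc |u ℓ| * |aa ε r ℓ| ≤ (c * ((ℓ:ℝ)+1)) * (E * ((ℓ:ℝ)+1) * (1/2:ℝ)^(ℓ+1)) := by
        apply mul_le_mul (hu ℓ) (aa_abs_le ε r ℓ E hE) (abs_nonneg _) (by positivity)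
    _ = (c * E) * (((ℓ:ℝ)+1)^2 * (1/2:ℝ)^(ℓ+1)) := by ring

lemma tsum_mul_aa_bound (ε : ℕ → ℝ) (r : ℕ) (E c : ℝ) (hE : ∀ j, |ε j| ≤ E)
    (u : ℕ → ℝ) (hu : ∀ ℓ, |u ℓ| ≤ c * ((ℓ : ℝ) + 1)) :
    |∑' ℓ, u ℓ * aa ε r ℓ| ≤ c * E * Bconst := by
  have h0 : (0:ℝ) ≤ E := (abs_nonneg _).trans (hE 0)
  have hc : (0:ℝ) ≤ c := by
    have := (abs_nonneg (u 0)).trans (hu 0); nlinarith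
  have hterm : ∀ ℓ, |u ℓ * aa ε r ℓ| ≤ (c * E) * (((ℓ:ℝ)+1)^2 * (1/2:ℝ)^(ℓ+1)) := by
    intro ℓ
    rw [abs_mul]
    calc |u ℓ| * |aa ε r ℓ| ≤ (c * ((ℓ:ℝ)+1)) * (E * ((ℓ:ℝ)+1) * (1/2:ℝ)^(ℓ+1)) := by
          apply mul_le_mul (hu ℓ) (aa_abs_le ε r ℓ E hE) (abs_nonneg _) (by positivity)
      _ = (c * E) * (((ℓ:ℝ)+1)^2 * (1/2:ℝ)^(ℓ+1)) := by ring
  have hmaj : Summable (fun ℓ : ℕ => (c * E) * (((ℓ:ℝ)+1)^2 * (1/2:ℝ)^(ℓ+1))) :=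
    bsummable.mul_left _
  have habs : Summable (fun ℓ => |u ℓ * aa ε r ℓ|) :=
    Summable.of_nonneg_of_le (fun ℓ => abs_nonneg _) hterm hmaj
  have habs' : Summable (fun ℓ => ‖u ℓ * aa ε r ℓ‖) := habs
  have hstep : |∑' ℓ, u ℓ * aa ε r ℓ| ≤ ∑' ℓ, |u ℓ * aa ε r ℓ| :=
    norm_tsum_le_tsum_norm habs'
  calc |∑' ℓ, u ℓ * aa ε r ℓ| ≤ ∑' ℓ, |u ℓ * aa ε r ℓ| := hstep
    _ ≤ ∑' ℓ : ℕ, (c * E) * (((ℓ:ℝ)+1)^2 * (1/2:ℝ)^(ℓ+1)) := Summable.tsum_le_tsum hterm habs hmaj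
    _ = c * E * Bconst := by rw [tsum_mul_left]; rfl

lemma aa_partial (ε : ℕ → ℝ) (r N : ℕ) :
    ∑ ℓ ∈ Finset.range N, aa ε r ℓ
      = -(1/2:ℝ)^N * ∑ i ∈ Finset.range N, ε (r + i + 1) := by
  induction N with
  | zero => simp
  | succ N ih =>
    rw [Finset.sum_range_succ, ih, aa, two_zpow_eq,
      Finset.sum_range_succ (f := fun i => ε (r + i + 1))]
    ring

lemma tsum_aa_eq_zero (ε : ℕ → ℝ) (hε : ∀ i, |ε i| ≤ 1/2) (r : ℕ) :
    ∑' ℓ, aa ε r ℓ = 0 := by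
  have hs : Summable (fun ℓ => aa ε r ℓ) := by
    have := summable_mul_aa ε r (1/2) 1 hε (fun _ => 1)
      (fun ℓ => by rw [abs_one]; nlinarith [Nat.cast_nonneg (α := ℝ) ℓ])
    simpa using this
  have h1 : Filter.Tendsto (fun N => ∑ ℓ ∈ Finset.range N, aa ε r ℓ)
      Filter.atTop (nhds (∑' ℓ, aa ε r ℓ)) := hs.hasSum.tendsto_sum_nat
  have h2 : Filter.Tendsto (fun N => ∑ ℓ ∈ Finset.range N, aa ε r ℓ)
      Filter.atTop (nhds 0) := by
    have hmaj : Filter.Tendsto (fun N : ℕ => (1/2) * ((N:ℝ) * (1/2:ℝ)^N))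
        Filter.atTop (nhds 0) := by
      have : Summable (fun n : ℕ => (n : ℝ) * (1/2:ℝ)^n) := by
        simpa using summable_pow_mul_geometric_of_norm_lt_one 1
          (r := (1/2:ℝ)) (by rw [Real.norm_eq_abs, abs_of_nonneg]; norm_num; norm_num)
      simpa using (this.tendsto_atTop_zero.const_mul (1/2 : ℝ))
    apply squeeze_zero_norm _ hmaj
    intro N
    rw [aa_partial, Real.norm_eq_abs, abs_mul, abs_neg, abs_pow]
    have h1 : |(1/2:ℝ)| ^ N = (1/2:ℝ)^N := by rw [abs_of_nonneg]; norm_num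
    have h2 : |∑ i ∈ Finset.range N, ε (r + i + 1)| ≤ (N:ℝ) * (1/2) := by
      calc |∑ i ∈ Finset.range N, ε (r + i + 1)|
          ≤ ∑ i ∈ Finset.range N, |ε (r + i + 1)| := Finset.abs_sum_le_sum_abs _ _
        _ ≤ ∑ i ∈ Finset.range N, (1/2:ℝ) := Finset.sum_le_sum fun i _ => hε _
        _ = (N:ℝ) * (1/2) := by rw [Finset.sum_const, Finset.card_range]; ring
    rw [h1]
    calc (1/2:ℝ)^N * |∑ i ∈ Finset.range N, ε (r + i + 1)|
        ≤ (1/2:ℝ)^N * ((N:ℝ) * (1/2)) := by gcongr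
      _ = (1/2) * ((N:ℝ) * (1/2:ℝ)^N) := by ring
  exact tendsto_nhds_unique h1 h2

lemma Rtilde_eq_aa (ε : ℕ → ℝ) (h : ℕ → ℝ) (r : ℕ) :
    Rtilde ε h r = ∑' ℓ, h (r + ℓ + 1) * aa ε r ℓ := by
  unfold Rtilde aa
  exact tsum_congr fun ℓ => mul_assoc _ _ _

theorem stmt_14 :
    ∃ C : ℝ, 0 < C ∧
      ∀ ε : ℕ → ℝ, (∀ i, |ε i| ≤ 1 / 2) →
        ∀ f g : ℕ → ℝ, ∀ Kf Kg Mg : ℝ, 0 ≤ Kf → 0 ≤ Kg → 0 ≤ Mg →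
          (∀ r r' : ℕ, |f r - f r'| ≤ Kf * |(r : ℝ) - r'|) →
          (∀ r r' : ℕ, |g r - g r'| ≤ Kg * |(r : ℝ) - r'|) →
          (∀ r : ℕ, |g r| ≤ Mg) →
          ∃ fε gε : ℕ → ℝ,
            (∀ r : ℕ, Rtilde ε (fun r => f r + r * g r) r = fε r + r * gε r) ∧
            (∀ r : ℕ, |fε r| ≤ C * (Kf + Mg) * (⨆ j, |ε j|)) ∧
            (∀ r : ℕ, |gε r| ≤ C * Kg * (⨆ j, |ε j|)) := by
  refine ⟨Bconst + 1, by linarith [Bconst_nonneg], ?_⟩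
  intro ε hε f g Kf Kg Mg hKf hKg hMg hf hg hgM
  have hbdd : BddAbove (Set.range fun j => |ε j|) :=
    ⟨1/2, by rintro x ⟨j, rfl⟩; exact hε j⟩
  set E := ⨆ j, |ε j| with hEdef
  have hEj : ∀ j, |ε j| ≤ E := fun j => le_ciSup hbdd j
  have hE0 : (0:ℝ) ≤ E := (abs_nonneg _).trans (hEj 0)
  have hu1 : ∀ r ℓ : ℕ,
      |(f (r+ℓ+1) - f r) + ((ℓ:ℝ)+1) * g (r+ℓ+1)| ≤ (Kf + Mg) * ((ℓ:ℝ)+1) := by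
    intro r ℓ
    have h1 : |f (r+ℓ+1) - f r| ≤ Kf * ((ℓ:ℝ)+1) := by
      have := hf (r+ℓ+1) r
      have hc : |((r+ℓ+1 : ℕ) : ℝ) - (r:ℕ)| = (ℓ:ℝ)+1 := by
        push_cast
        rw [abs_of_nonneg] <;> push_cast <;> ring_nf
        positivity
      rw [hc] at this; exact this
    have h2 : |((ℓ:ℝ)+1) * g (r+ℓ+1)| ≤ Mg * ((ℓ:ℝ)+1) := by
      rw [abs_mul, abs_of_nonneg (by positivity : (0:ℝ) ≤ (ℓ:ℝ)+1)]
      calc ((ℓ:ℝ)+1) * |g (r+ℓ+1)| ≤ ((ℓ:ℝ)+1) * Mg := by gcongr; exact hgM _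
        _ = Mg * ((ℓ:ℝ)+1) := by ring
    calc |(f (r+ℓ+1) - f r) + ((ℓ:ℝ)+1) * g (r+ℓ+1)|
        ≤ |f (r+ℓ+1) - f r| + |((ℓ:ℝ)+1) * g (r+ℓ+1)| := abs_add_le _ _
      _ ≤ Kf * ((ℓ:ℝ)+1) + Mg * ((ℓ:ℝ)+1) := add_le_add h1 h2
      _ = (Kf + Mg) * ((ℓ:ℝ)+1) := by ring
  have hu2 : ∀ r ℓ : ℕ, |g (r+ℓ+1) - g r| ≤ Kg * ((ℓ:ℝ)+1) := by
    intro r ℓ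
    have := hg (r+ℓ+1) r
    have hc : |((r+ℓ+1 : ℕ) : ℝ) - (r:ℕ)| = (ℓ:ℝ)+1 := by
      push_cast
      rw [abs_of_nonneg] <;> push_cast <;> ring_nf
      positivity
    rw [hc] at this; exact this
  refine ⟨fun r => ∑' ℓ, ((f (r+ℓ+1) - f r) + ((ℓ:ℝ)+1) * g (r+ℓ+1)) * aa ε r ℓ,
    fun r => ∑' ℓ, (g (r+ℓ+1) - g r) * aa ε r ℓ, ?_, ?_, ?_⟩
  · intro r
    have hs1 : Summable (fun ℓ : ℕ =>
        ((f (r+ℓ+1) - f r) + ((ℓ:ℝ)+1) * g (r+ℓ+1)) * aa ε r ℓ) :=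
      summable_mul_aa ε r E (Kf + Mg) hEj _ (hu1 r)
    have hs2 : Summable (fun ℓ : ℕ => (g (r+ℓ+1) - g r) * aa ε r ℓ) :=
      summable_mul_aa ε r E Kg hEj _ (hu2 r)
    have hsa : Summable (fun ℓ : ℕ => aa ε r ℓ) := by
      have := summable_mul_aa ε r E 1 hEj (fun _ => 1)
        (fun ℓ => by rw [abs_one]; nlinarith [Nat.cast_nonneg (α := ℝ) ℓ])
      simpa using this
    rw [Rtilde_eq_aa]
    have hterm : ∀ ℓ : ℕ, (fun r => f r + r * g r) (r + ℓ + 1) * aa ε r ℓ =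
        ((f (r+ℓ+1) - f r) + ((ℓ:ℝ)+1) * g (r+ℓ+1)) * aa ε r ℓ
          + (r:ℝ) * ((g (r+ℓ+1) - g r) * aa ε r ℓ)
          + (f r + r * g r) * aa ε r ℓ := by
      intro ℓ
      show (f (r+ℓ+1) + ((r+ℓ+1 : ℕ) : ℝ) * g (r+ℓ+1)) * aa ε r ℓ = _
      push_cast
      ring
    rw [tsum_congr hterm,
      Summable.tsum_add (hs1.add (hs2.mul_left (r:ℝ))) (hsa.mul_left _),
      Summable.tsum_add hs1 (hs2.mul_left (r:ℝ)), tsum_mul_left, tsum_mul_left,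
      tsum_aa_eq_zero ε hε r, mul_zero, add_zero]
  · intro r
    have := tsum_mul_aa_bound ε r E (Kf + Mg) hEj _ (hu1 r)
    have hB := Bconst_nonneg
    nlinarith [this, mul_nonneg (add_nonneg hKf hMg) hE0]
  · intro r
    have := tsum_mul_aa_bound ε r E Kg hEj _ (hu2 r)
    have hB := Bconst_nonneg
    nlinarith [this, mul_nonneg hKg hE0]
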